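/- Fix k ≥ 0 and a server i, and let l_k = LI(τ_k + 1). Then almost surely, on the event {i ≠ l_k}: E[ Σ_{t = τ_k + 1}^{τ_{k+1}} s_i(t) | ℱ^ξ_{τ_k} ] = μ_i · E[ τ_{k+1} − τ_k | ℱ^ξ_{τ_k} ]. -/

import Mathlib

open MeasureTheory ENNReal Filter ProbabilityTheory

namespace PI

/-- The state space of the PI chain: queue lengths and identity of the Last-Idle server. -/
abbrev State (n : ℕ) := (Fin n → ℕ) × Fin n

/-- The set of idle servers for the queue-length vector `q`. -/
def idleSet {n : ℕ} (q : Fin n → ℕ) : Finset (Fin n) := Finset.univ.filter (fun i => q i = 0)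

/-- One step of the PI dynamics: given the current state `x`, the incoming batch size `batch`,
the service capacities `svc` and the uniform tie-breaking noise `u` (converted into a uniform
choice among the idle servers by `choice`).  The new Last-Idle server is chosen uniformly among
the currently idle servers if there are any (otherwise it is unchanged), the whole batch joins
its queue, and then every server serves up to its capacity (`ℕ`-subtraction is truncated,
realizing the positive part `[·]⁺`). -/
def step {n : ℕ} (choice : Finset (Fin n) → ℝ → Fin n)
    (x : State n) (batch : ℕ) (svc : Fin n → ℕ) (u : ℝ) : State n :=
  let l := if (idleSet x.1).Nonempty then choice (idleSet x.1) u else x.2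
  (fun i => x.1 i + (if l = i then batch else 0) - svc i, l)

/-- The PI trajectory `X = (Q, LI)` started from `α`; the step from time `t` to `t+1`
(i.e. time slot `t+1`) uses the noise of index `t`. -/
def traj {n : ℕ} {Ω : Type} (choice : Finset (Fin n) → ℝ → Fin n)
    (a : ℕ → Ω → ℕ) (s : Fin n → ℕ → Ω → ℕ) (U : ℕ → Ω → ℝ)
    (α : State n) : ℕ → Ω → State n
  | 0 => fun _ => α
  | (t+1) => fun ω => step choice (traj choice a s U α t ω) (a t ω) (fun i => s i t ω) (U t ω)

/-- Index type for the driving noise: arrivals, services, tie-breaking uniforms. -/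
def NoiseIdx (n : ℕ) := (ℕ ⊕ (Fin n × ℕ)) ⊕ ℕ

/-- Value type of each noise coordinate. -/
def NoiseType {n : ℕ} : NoiseIdx n → Type
  | .inl (.inl _) => ℕ
  | .inl (.inr _) => ℕ
  | .inr _ => ℝ

instance {n : ℕ} : ∀ k : NoiseIdx n, MeasurableSpace (NoiseType k)
  | .inl (.inl _) => inferInstanceAs (MeasurableSpace ℕ)
  | .inl (.inr _) => inferInstanceAs (MeasurableSpace ℕ)
  | .inr _ => inferInstanceAs (MeasurableSpace ℝ)

/-- The combined noise family (arrivals, services, tie-breaking uniforms). -/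
def noise {n : ℕ} {Ω : Type} (a : ℕ → Ω → ℕ) (s : Fin n → ℕ → Ω → ℕ)
    (U : ℕ → Ω → ℝ) : ∀ k : NoiseIdx n, Ω → NoiseType k
  | .inl (.inl t) => a t
  | .inl (.inr p) => s p.1 p.2
  | .inr t => U t

/-- The empty state with Last-Idle server `i`. -/
def emptyState {n : ℕ} (i : Fin n) : State n := (fun _ => 0, i)

/-- First time `t ≥ 1` at which the process `X` lies in `B` (with value `∞ ∈ ℝ≥0∞`
if this never happens). -/
noncomputable def hitTime {n : ℕ} {Ω : Type} (X : ℕ → Ω → State n)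
    (B : Set (State n)) (ω : Ω) : ℝ≥0∞ :=
  sInf {x : ℝ≥0∞ | ∃ t : ℕ, 1 ≤ t ∧ X t ω ∈ B ∧ x = (t : ℝ≥0∞)}

/-- The event `Ω_t`: some server other than the Last-Idle server is idle. -/
def boundaryEvt {n : ℕ} (x : State n) : Prop := ∃ i, i ≠ x.2 ∧ x.1 i = 0

/-- The sampling times `τ_k`: the successive (random) times `t ≥ 1` at which `Ω_t` occurs. -/
noncomputable def sampleTime {n : ℕ} {Ω : Type} (X : ℕ → Ω → State n) : ℕ → Ω → ℕ
  | 0 => fun ω => sInf {t | 1 ≤ t ∧ boundaryEvt (X t ω)}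
  | (k+1) => fun ω => sInf {t | sampleTime X k ω < t ∧ boundaryEvt (X t ω)}

/-- The sampled chain `Y_k = X (τ_k)`. -/
noncomputable def sampled {n : ℕ} {Ω : Type} (X : ℕ → Ω → State n) (k : ℕ) (ω : Ω) : State n :=
  X (sampleTime X k ω) ω

/-- The tie-breaking variable `ξ_t`, `t ≥ 1`: the uniform choice among the servers idle at
time `t − 1` (which is the new Last-Idle server when some server is idle at `t − 1`). -/
def xi {n : ℕ} {Ω : Type} (choice : Finset (Fin n) → ℝ → Fin n) (U : ℕ → Ω → ℝ)
    (X : ℕ → Ω → State n) (t : ℕ) (ω : Ω) : Fin n :=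
  choice (idleSet ((X (t - 1) ω).1)) (U (t - 1) ω)

/-- The σ-algebra `ℱ^ξ_t = σ(X 0, …, X t, ξ 1, …, ξ (t+1))`. -/
noncomputable def filtXi {n : ℕ} {Ω : Type} (choice : Finset (Fin n) → ℝ → Fin n)
    (U : ℕ → Ω → ℝ) (X : ℕ → Ω → State n) (t : ℕ) : MeasurableSpace Ω :=
  (⨆ r ∈ Set.Iic t, MeasurableSpace.comap (X r) ⊤) ⊔
    (⨆ r ∈ Set.Iic t, MeasurableSpace.comap (xi choice U X (r + 1)) ⊤)

/-- The Lyapunov function `L α = ∑ i, (α i) ^ (1 + γ)` (valued in `ℝ≥0∞`). -/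
noncomputable def lyap {n : ℕ} (γ : ℝ) (x : State n) : ℝ≥0∞ :=
  ∑ i, (x.1 i : ℝ≥0∞) ^ ((1 : ℝ) + γ)

/-- `σ = inf {k ≥ 0 : Y_k ∈ A}`, the first sampling index at which the sampled chain is in
`A` (`∞ ∈ ℕ∞` if there is none). -/
noncomputable def hitIdx {n : ℕ} {Ω : Type} (X : ℕ → Ω → State n)
    (A : Set (State n)) (ω : Ω) : ℕ∞ :=
  sInf {k : ℕ∞ | ∃ m : ℕ, k = (m : ℕ∞) ∧ sampled X m ω ∈ A}

end PI

section Aux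

variable {n : ℕ} {Ω : Type}

lemma measurableSet_step_fiber (choice : Finset (Fin n) → ℝ → Fin n)
    (hch : ∀ I, Measurable (choice I)) (x : PI.State n) (b : ℕ) (v : Fin n → ℕ)
    (y : PI.State n) : MeasurableSet {u : ℝ | PI.step choice x b v u = y} := by
  by_cases h : (PI.idleSet x.1).Nonempty
  · have : {u : ℝ | PI.step choice x b v u = y}
        = (choice (PI.idleSet x.1)) ⁻¹'
          {l : Fin n | ((fun i => x.1 i + (if l = i then b else 0) - v i, l) : PI.State n) = y} := by
      ext u
      simp only [Set.mem_setOf_eq, Set.mem_preimage, PI.step, h, if_true]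
    rw [this]
    exact hch _ MeasurableSet.of_discrete
  · have : {u : ℝ | PI.step choice x b v u = y}
        = {u : ℝ | ((fun i => x.1 i + (if x.2 = i then b else 0) - v i, x.2) : PI.State n) = y} := by
      ext u; simp only [Set.mem_setOf_eq, PI.step, h, if_false]
    rw [this]
    exact MeasurableSet.const _

lemma traj_measurable' [MeasurableSpace Ω] {m : MeasurableSpace Ω}
    (choice : Finset (Fin n) → ℝ → Fin n)
    (a : ℕ → Ω → ℕ) (s : Fin n → ℕ → Ω → ℕ) (U : ℕ → Ω → ℝ) (α : PI.State n)
    (hch : ∀ I, Measurable (choice I)) (t : ℕ)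
    (ha' : ∀ r, r < t → Measurable[m] (a r))
    (hs' : ∀ j r, r < t → Measurable[m] (s j r))
    (hU' : ∀ r, r < t → Measurable[m] (U r)) :
    Measurable[m] (PI.traj choice a s U α t) := by
  induction t with
  | zero => exact measurable_const
  | succ t ih =>
    have hT : Measurable[m] (PI.traj choice a s U α t) :=
      ih (fun r hr => ha' r (hr.trans (Nat.lt_succ_self t)))
        (fun j r hr => hs' j r (hr.trans (Nat.lt_succ_self t)))
        (fun r hr => hU' r (hr.trans (Nat.lt_succ_self t)))
    apply measurable_to_countable'
    intro y
    have : PI.traj choice a s U α (t+1) ⁻¹' {y}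
        = ⋃ (x : PI.State n), ⋃ (b : ℕ), ⋃ (v : Fin n → ℕ),
            ((PI.traj choice a s U α t ⁻¹' {x}) ∩ (a t ⁻¹' {b}) ∩
              (⋂ j, s j t ⁻¹' {v j}) ∩ (U t ⁻¹' {u | PI.step choice x b v u = y})) := by
      ext ω
      simp only [Set.mem_preimage, Set.mem_singleton_iff, Set.mem_iUnion, Set.mem_inter_iff,
        Set.mem_iInter, Set.mem_setOf_eq]
      constructor
      · intro hy
        exact ⟨PI.traj choice a s U α t ω, a t ω, fun j => s j t ω,
          ⟨⟨rfl, rfl⟩, fun j => rfl⟩, hy⟩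
      · rintro ⟨x, b, v, ⟨⟨hx, hb⟩, hv⟩, hy⟩
        show PI.step choice (PI.traj choice a s U α t ω) (a t ω) (fun j => s j t ω) (U t ω) = y
        rw [hx, hb]
        have hv' : (fun j => s j t ω) = v := funext hv
        rw [hv']
        exact hy
    rw [this]
    refine MeasurableSet.iUnion fun x => MeasurableSet.iUnion fun b =>
      MeasurableSet.iUnion fun v => ?_
    refine (((hT MeasurableSet.of_discrete).inter
      (ha' t (Nat.lt_succ_self t) MeasurableSet.of_discrete)).inter
      (MeasurableSet.iInter fun j => hs' j t (Nat.lt_succ_self t) MeasurableSet.of_discrete)).inter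
      (hU' t (Nat.lt_succ_self t) (measurableSet_step_fiber choice hch x b v y))

lemma measurable_sInf_nat [MeasurableSpace Ω] {m : MeasurableSpace Ω} (S : Ω → Set ℕ)
    (h : ∀ t, MeasurableSet[m] {ω | t ∈ S ω}) :
    Measurable[m] (fun ω => sInf (S ω)) := by
  apply measurable_to_countable'
  intro v
  have : (fun ω => sInf (S ω)) ⁻¹' {v}
      = (({ω | v ∈ S ω} ∩ ⋂ (t : ℕ), ⋂ (_ : t < v), {ω | t ∈ S ω}ᶜ)
          ∪ ({ω | v = 0} ∩ ⋂ (t : ℕ), {ω | t ∈ S ω}ᶜ)) := by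
    ext ω
    simp only [Set.mem_preimage, Set.mem_singleton_iff, Set.mem_union, Set.mem_inter_iff,
      Set.mem_iInter, Set.mem_compl_iff, Set.mem_setOf_eq]
    constructor
    · intro hv
      by_cases hne : (S ω).Nonempty
      · left
        refine ⟨hv ▸ Nat.sInf_mem hne, fun t ht hts => ?_⟩
        exact absurd (Nat.sInf_le hts) (by omega)
      · right
        have hS : S ω = ∅ := Set.not_nonempty_iff_eq_empty.mp hne
        constructor
        · rw [← hv, hS, Nat.sInf_empty]
        · intro t ht; rw [hS] at ht; exact ht
    · rintro (⟨hv, hlt⟩ | ⟨hv0, hall⟩)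
      · refine le_antisymm (Nat.sInf_le hv) ?_
        by_contra hc
        push_neg at hc
        exact hlt _ hc (Nat.sInf_mem ⟨v, hv⟩)
      · have hS : S ω = ∅ := Set.eq_empty_iff_forall_notMem.mpr hall
        rw [hS, Nat.sInf_empty, hv0]
  rw [this]
  refine MeasurableSet.union ((h v).inter (MeasurableSet.iInter fun t =>
      MeasurableSet.iInter fun _ => (h t).compl)) ?_
  refine MeasurableSet.inter ?_ (MeasurableSet.iInter fun t => (h t).compl)
  exact MeasurableSet.const _

lemma xi_measurable' [MeasurableSpace Ω] {m : MeasurableSpace Ω}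
    (choice : Finset (Fin n) → ℝ → Fin n) (U : ℕ → Ω → ℝ) (X : ℕ → Ω → PI.State n) (t : ℕ)
    (hch : ∀ I, Measurable (choice I))
    (hX : Measurable[m] (X (t - 1))) (hU : Measurable[m] (U (t - 1))) :
    Measurable[m] (PI.xi choice U X t) := by
  apply measurable_to_countable'
  intro y
  have : PI.xi choice U X t ⁻¹' {y}
      = ⋃ (x : PI.State n), (X (t-1) ⁻¹' {x}) ∩
          (U (t-1) ⁻¹' {u | choice (PI.idleSet x.1) u = y}) := by
    ext ω
    simp only [Set.mem_preimage, Set.mem_singleton_iff, Set.mem_iUnion, Set.mem_inter_iff,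
      Set.mem_setOf_eq, PI.xi]
    constructor
    · intro hy; exact ⟨X (t-1) ω, rfl, hy⟩
    · rintro ⟨x, hx, hy⟩; rw [hx]; exact hy
  rw [this]
  exact MeasurableSet.iUnion fun x => (hX MeasurableSet.of_discrete).inter
    (hU (hch (PI.idleSet x.1) (MeasurableSet.of_discrete (s := {y}))))

lemma sampleTime_measurable [MeasurableSpace Ω] (X : ℕ → Ω → PI.State n)
    (hX : ∀ t, Measurable (X t)) : ∀ k, Measurable (PI.sampleTime X k) := by
  intro k
  induction k with
  | zero =>
    have he : PI.sampleTime X 0 = fun ω => sInf {t | 1 ≤ t ∧ PI.boundaryEvt (X t ω)} := rfl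
    rw [he]
    apply measurable_sInf_nat (m := inferInstance)
    intro t
    have : {ω | t ∈ {t' | 1 ≤ t' ∧ PI.boundaryEvt (X t' ω)}}
        = {ω | 1 ≤ t} ∩ (X t ⁻¹' {x | PI.boundaryEvt x}) := by
      ext ω; simp [Set.mem_setOf_eq]
    rw [this]
    exact (MeasurableSet.const _).inter (hX t MeasurableSet.of_discrete)
  | succ k ih =>
    have he : PI.sampleTime X (k+1)
        = fun ω => sInf {t | PI.sampleTime X k ω < t ∧ PI.boundaryEvt (X t ω)} := rfl
    rw [he]
    apply measurable_sInf_nat (m := inferInstance)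
    intro t
    have : {ω | t ∈ {t' | PI.sampleTime X k ω < t' ∧ PI.boundaryEvt (X t' ω)}}
        = (PI.sampleTime X k ⁻¹' (Set.Iio t)) ∩ (X t ⁻¹' {x | PI.boundaryEvt x}) := by
      ext ω; simp [Set.mem_setOf_eq]
    rw [this]
    exact (ih MeasurableSet.of_discrete).inter (hX t MeasurableSet.of_discrete)

end Aux


/-- **A Wald-type identity for the service consumed over a sampling interval** (eqs.
(s_i1)–(s_i3)).  Fix `k ≥ 0` and a server `i`, and let `l_k = LI (τ_k + 1)` be the Last-Idle
server of the interval `[τ_k + 1, τ_{k+1}]`.  Then, almost surely on the event `{i ≠ l_k}`,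
`E[ ∑_{t = τ_k + 1}^{τ_{k+1}} s_i(t) | ℱ^ξ_{τ_k} ] = μ_i · E[ τ_{k+1} − τ_k | ℱ^ξ_{τ_k} ]`.
The conditional-expectation identity is stated in its (equivalent) integrated form: for every
set `E` of the stopped σ-algebra `ℱ^ξ_{τ_k}` contained in the event `{i ≠ l_k}`, the equality
of the corresponding integrals holds in `[0,∞]`.  (In the indexing used here, the service
capacity of server `i` in slot `t` is `s i (t-1)`, so the sum over slots
`τ_k + 1, …, τ_{k+1}` is the sum over noise indices `τ_k ≤ u < τ_{k+1}`.) -/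
theorem pi_wald_identity_for_interval
    {n : ℕ} (hn : 2 ≤ n) {Ω : Type} [MeasurableSpace Ω]
    -- `P α` is the law of the system driven by the noise below, started at `X 0 = α`
    (P : PI.State n → Measure Ω) (hP : ∀ α, IsProbabilityMeasure (P α))
    (a : ℕ → Ω → ℕ) (s : Fin n → ℕ → Ω → ℕ) (U : ℕ → Ω → ℝ)
    (choice : Finset (Fin n) → ℝ → Fin n)
    (νa : Measure ℕ) (νs : Fin n → Measure ℕ)
    (lam σa : ℝ) (μ : Fin n → ℝ) (smax : ℕ)
    (ha_meas : ∀ t, Measurable (a t)) (hs_meas : ∀ i t, Measurable (s i t))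
    (hU_meas : ∀ t, Measurable (U t)) (hchoice_meas : ∀ I, Measurable (choice I))
    -- the arrivals are i.i.d. with law `νa`, the services of server `i` i.i.d. with law `νs i`,
    -- the tie-breaking noise is uniform on `[0,1]`, and all are mutually independent,
    -- under every starting state
    (ha_law : ∀ α t, Measure.map (a t) (P α) = νa)
    (hs_law : ∀ α i t, Measure.map (s i t) (P α) = νs i)
    (hU_law : ∀ α t, Measure.map (U t) (P α) = volume.restrict (Set.Icc (0:ℝ) 1))
    (hindep : ∀ α, iIndepFun (PI.noise a s U) (P α))
    -- `P(a(1) = 0) > 0`, `E[a(1)] = λ`, `Var(a(1)) = σa² < ∞`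
    (ha0 : νa {0} ≠ 0)
    (ha_mean : ∫⁻ k, (k : ℝ≥0∞) ∂νa = ENNReal.ofReal lam)
    (ha_var : ∫⁻ k, ((k : ℝ≥0∞)) ^ 2 ∂νa = ENNReal.ofReal (lam ^ 2 + σa ^ 2))
    -- `1 ≤ s i t ≤ smax` and `E[s i t] = μ i`
    (hs_bdd : ∀ i, (νs i) {k : ℕ | ¬(1 ≤ k ∧ k ≤ smax)} = 0)
    (hs_mean : ∀ i, ∫⁻ k, (k : ℝ≥0∞) ∂(νs i) = ENNReal.ofReal (μ i))
    -- `choice I` applied to a uniform `[0,1]` variable is uniform on `I`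
    (hchoice_unif : ∀ I : Finset (Fin n), I.Nonempty → ∀ i ∈ I,
      (volume.restrict (Set.Icc (0:ℝ) 1)) {u | choice I u = i} = (I.card : ℝ≥0∞)⁻¹)
    :
    ∀ X : PI.State n → ℕ → Ω → PI.State n, X = PI.traj choice a s U →
    ∀ α : PI.State n, ∀ k : ℕ, ∀ i : Fin n,
    ∀ E : Set Ω,
      (∀ t : ℕ, MeasurableSet[PI.filtXi choice U (X α) t]
          (E ∩ {ω | PI.sampleTime (X α) k ω ≤ t})) →
      (∀ ω ∈ E, i ≠ (X α (PI.sampleTime (X α) k ω + 1) ω).2) →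
      ∫⁻ ω in E,
          (∑ t ∈ Finset.Ico (PI.sampleTime (X α) k ω) (PI.sampleTime (X α) (k + 1) ω),
            (s i t ω : ℝ≥0∞)) ∂(P α)
        = ENNReal.ofReal (μ i)
            * ∫⁻ ω in E,
                ((PI.sampleTime (X α) (k + 1) ω - PI.sampleTime (X α) k ω : ℕ) : ℝ≥0∞)
                ∂(P α) := by
  intro X hX α k i E hE _hEl
  subst hX
  haveI := hP α
  set T : ℕ → Ω → PI.State n := PI.traj choice a s U α with hT
  set τk : Ω → ℕ := PI.sampleTime T k with hτk
  set τk1 : Ω → ℕ := PI.sampleTime T (k+1) with hτk1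
  -- basic measurability
  have hnoise_meas : ∀ j : PI.NoiseIdx n, Measurable (PI.noise a s U j) := by
    rintro ((t | ⟨j, t⟩) | t)
    · exact ha_meas t
    · exact hs_meas j t
    · exact hU_meas t
  have hXm : ∀ t, Measurable (T t) := fun t =>
    traj_measurable' choice a s U α hchoice_meas t (fun r _ => ha_meas r)
      (fun j r _ => hs_meas j r) (fun r _ => hU_meas r)
  have hτm : ∀ j, Measurable (PI.sampleTime T j) := sampleTime_measurable T hXm
  have hxim : ∀ t : ℕ, Measurable (PI.xi choice U T (t+1)) := fun t =>
    xi_measurable' choice U T (t+1) hchoice_meas (hXm t) (hU_meas t)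
  have hstate_top : ((⊤ : MeasurableSpace (PI.State n)) = inferInstanceAs (MeasurableSpace (PI.State n))) := by
    refine le_antisymm ?_ le_top
    rw [MeasurableSpace.le_def]
    intro S _
    exact MeasurableSet.of_discrete
  have hfin_top : ((⊤ : MeasurableSpace (Fin n)) = inferInstanceAs (MeasurableSpace (Fin n))) := by
    refine le_antisymm ?_ le_top
    rw [MeasurableSpace.le_def]
  have hfilt_le : ∀ t, PI.filtXi choice U T t ≤ (inferInstance : MeasurableSpace Ω) := by
    intro t
    apply sup_le
    · exact iSup₂_le fun r _ => hstate_top ▸ (hXm r).comap_le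
    · exact iSup₂_le fun r _ => hfin_top ▸ (hxim r).comap_le
  have hEmeas : MeasurableSet E := by
    have hEeq : E = ⋃ t : ℕ, (E ∩ {ω | τk ω ≤ t}) := by
      ext ω
      simp only [Set.mem_iUnion, Set.mem_inter_iff, Set.mem_setOf_eq]
      exact ⟨fun h => ⟨τk ω, h, le_refl _⟩, fun ⟨t, h, _⟩ => h⟩
    rw [hEeq]
    exact MeasurableSet.iUnion fun t => hfilt_le t _ (hE t)
  -- the sigma-algebra generated by all noise except s i u
  set j0 : ℕ → PI.NoiseIdx n := fun u => Sum.inl (Sum.inr (i, u)) with hj0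
  set G : ℕ → MeasurableSpace Ω := fun u =>
    ⨆ j ∈ ({j0 u}ᶜ : Set (PI.NoiseIdx n)),
      MeasurableSpace.comap (PI.noise a s U j) inferInstance with hG
  have hle : ∀ j : PI.NoiseIdx n,
      MeasurableSpace.comap (PI.noise a s U j) inferInstance
        ≤ (inferInstance : MeasurableSpace Ω) := fun j => (hnoise_meas j).comap_le
  have hGle : ∀ u, G u ≤ (inferInstance : MeasurableSpace Ω) := fun u =>
    iSup₂_le fun j _ => hle j
  have hindepG : ∀ u, Indep (MeasurableSpace.comap (s i u) inferInstance) (G u) (P α) := by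
    intro u
    have h := indep_biSup_compl hle ((hindep α).iIndep) {j0 u}
    rw [iSup_singleton] at h
    exact h
  have hGnoise : ∀ u, ∀ j, j ≠ j0 u → Measurable[G u] (PI.noise a s U j) := by
    intro u j hj
    exact Measurable.of_comap_le (le_iSup₂ (f := fun j (_ : j ∈ ({j0 u}ᶜ : Set (PI.NoiseIdx n))) =>
      MeasurableSpace.comap (PI.noise a s U j) inferInstance) j hj)
  have hGa : ∀ u t, Measurable[G u] (a t) := fun u t =>
    hGnoise u (Sum.inl (Sum.inl t)) (by intro h; rw [hj0] at h; injection h with h'; exact Sum.inl_ne_inr h')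
  have hGs : ∀ u j t, t ≠ u → Measurable[G u] (s j t) := by
    intro u j t ht
    refine hGnoise u (Sum.inl (Sum.inr (j, t))) ?_
    intro h
    rw [hj0] at h
    injection h with h1
    injection h1 with h2
    exact ht (congrArg Prod.snd h2)
  have hGU : ∀ u t, Measurable[G u] (U t) := fun u t =>
    hGnoise u (Sum.inr t) (by intro h; rw [hj0] at h; exact Sum.inr_ne_inl h)
  have hGX : ∀ u t, t ≤ u → Measurable[G u] (T t) := fun u t htu =>
    traj_measurable' choice a s U α hchoice_meas t (fun r _ => hGa u r)
      (fun j r hr => hGs u j r (by omega)) (fun r _ => hGU u r)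
  have hGfilt : ∀ u t, t ≤ u → PI.filtXi choice U T t ≤ G u := by
    intro u t htu
    apply sup_le
    · refine iSup₂_le fun r hr => ?_
      have hr' : r ≤ t := hr
      exact hstate_top ▸ (hGX u r (hr'.trans htu)).comap_le
    · refine iSup₂_le fun r hr => ?_
      have hr' : r ≤ t := hr
      have : Measurable[G u] (PI.xi choice U T (r+1)) :=
        xi_measurable' choice U T (r+1) hchoice_meas (hGX u r (hr'.trans htu)) (hGU u r)
      exact hfin_top ▸ this.comap_le
  -- the key sets
  set Dset : ℕ → Set Ω := fun u => {ω | τk ω ≤ u ∧ u < τk1 ω} with hDset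
  have hDmeas : ∀ u, MeasurableSet (Dset u) := by
    intro u
    have : Dset u = (τk ⁻¹' Set.Iic u) ∩ (τk1 ⁻¹' Set.Ioi u) := by
      ext ω; simp [hDset, Set.mem_setOf_eq]
    rw [this]
    exact ((hτm k) MeasurableSet.of_discrete).inter ((hτm (k+1)) MeasurableSet.of_discrete)
  set Aset : ℕ → Set Ω := fun u =>
    ⋃ m, ⋃ (_ : m ≤ u), ((E ∩ {ω | τk ω = m}) ∩
      ⋂ t, ⋂ (_ : m < t ∧ t ≤ u), (T t ⁻¹' {x | PI.boundaryEvt x})ᶜ) with hAset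
  set N : Set Ω := {ω | ∀ t, τk ω < t → ¬ PI.boundaryEvt (T t ω)} with hNdef
  -- E ∩ {τk = m} is in the filtration at time m
  have hEτ : ∀ m : ℕ, MeasurableSet[PI.filtXi choice U T m] (E ∩ {ω | τk ω = m}) := by
    intro m
    cases m with
    | zero =>
      have h0 : E ∩ {ω | τk ω = 0} = E ∩ {ω | τk ω ≤ 0} := by
        ext ω; simp [Nat.le_zero]
      rw [h0]; exact hE 0
    | succ m =>
      have hmono : PI.filtXi choice U T m ≤ PI.filtXi choice U T (m+1) := by
        apply sup_le_sup <;>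
          exact biSup_mono (fun r (hr : r ≤ m) => (hr.trans (Nat.le_succ m) : r ≤ m + 1))
      have h1 : E ∩ {ω | τk ω = m+1}
          = (E ∩ {ω | τk ω ≤ m+1}) \ (E ∩ {ω | τk ω ≤ m}) := by
        ext ω
        simp only [Set.mem_inter_iff, Set.mem_setOf_eq, Set.mem_diff, not_and]
        constructor
        · rintro ⟨h, h'⟩; exact ⟨⟨h, by omega⟩, fun _ => by omega⟩
        · rintro ⟨⟨h, h'⟩, h''⟩; exact ⟨h, by have := h'' h; omega⟩
      rw [h1]
      exact (hE (m+1)).diff (hmono _ (hE m))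
  have hAG : ∀ u, MeasurableSet[G u] (Aset u) := by
    intro u
    refine MeasurableSet.iUnion fun m => MeasurableSet.iUnion fun hm => ?_
    refine MeasurableSet.inter (hGfilt u m hm _ (hEτ m)) ?_
    refine MeasurableSet.iInter fun t => MeasurableSet.iInter fun ht => ?_
    exact ((hGX u t ht.2) MeasurableSet.of_discrete).compl
  have hAmeas : ∀ u, MeasurableSet (Aset u) := fun u => hGle u _ (hAG u)
  -- pointwise comparisons between A, B = E ∩ D and N
  have hτk1eq : ∀ ω, τk1 ω = sInf {t | τk ω < t ∧ PI.boundaryEvt (T t ω)} := fun ω => rfl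
  have hBsubA : ∀ u, E ∩ Dset u ⊆ Aset u := by
    rintro u ω ⟨hωE, hωD⟩
    obtain ⟨hle, hlt⟩ : τk ω ≤ u ∧ u < τk1 ω := hωD
    refine Set.mem_iUnion.mpr ⟨τk ω, Set.mem_iUnion.mpr ⟨hle, ⟨hωE, rfl⟩, ?_⟩⟩
    refine Set.mem_iInter.mpr fun t => Set.mem_iInter.mpr fun ht => ?_
    intro hbd
    have h1 : τk1 ω ≤ t := by
      rw [hτk1eq ω]
      exact Nat.sInf_le ⟨ht.1, hbd⟩
    exact absurd h1 (by omega)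
  have hAsub : ∀ u, Aset u ⊆ (E ∩ Dset u) ∪ N := by
    intro u ω hω
    obtain ⟨m, hrest⟩ := Set.mem_iUnion.mp hω
    obtain ⟨hm, hrest⟩ := Set.mem_iUnion.mp hrest
    obtain ⟨⟨hωE, hτm'⟩, hno⟩ := hrest
    by_cases hN : ω ∈ N
    · exact Or.inr hN
    · left
      have hτm'' : τk ω = m := hτm'
      have hN' : ∃ t, τk ω < t ∧ PI.boundaryEvt (T t ω) := by
        by_contra hc
        push_neg at hc
        exact hN (fun t ht => hc t ht)
      obtain ⟨t0, ht0, hbd0⟩ := hN'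
      refine ⟨hωE, ?_, ?_⟩
      · rw [hτm'']; exact hm
      · rw [hτk1eq ω]
        have hne : {t | τk ω < t ∧ PI.boundaryEvt (T t ω)}.Nonempty := ⟨t0, ht0, hbd0⟩
        have hmem := Nat.sInf_mem hne
        set t1 := sInf {t | τk ω < t ∧ PI.boundaryEvt (T t ω)} with ht1
        obtain ⟨hmt1, hbd1⟩ : τk ω < t1 ∧ PI.boundaryEvt (T t1 ω) := hmem
        by_contra hc
        push_neg at hc
        have := Set.mem_iInter.mp (Set.mem_iInter.mp hno t1) ⟨by omega, hc⟩
        exact this hbd1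
  -- unfolding lemmas for the dynamics
  have hTsucc : ∀ (t : ℕ) (ω : Ω), T (t+1) ω
      = PI.step choice (T t ω) (a t ω) (fun j => s j t ω) (U t ω) := fun _ _ => rfl
  have hstep2 : ∀ (x : PI.State n) (b : ℕ) (v : Fin n → ℕ) (u' : ℝ),
      (PI.step choice x b v u').2
        = if (PI.idleSet x.1).Nonempty then choice (PI.idleSet x.1) u' else x.2 :=
    fun _ _ _ _ => rfl
  have hstep1 : ∀ (x : PI.State n) (b : ℕ) (v : Fin n → ℕ) (u' : ℝ) (j : Fin n),
      (PI.step choice x b v u').1 j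
        = x.1 j + (if (PI.step choice x b v u').2 = j then b else 0) - v j :=
    fun _ _ _ _ _ => rfl
  -- the set of paths with no further boundary event is null
  have hNnull : P α N = 0 := by
    have hgood : N ⊆ (⋃ (j : Fin n), ⋃ (t : ℕ), s j t ⁻¹' {v : ℕ | ¬ 1 ≤ v}) ∪
        (⋃ (l : Fin n), ⋃ (t : ℕ), {ω | choice {l} (U t ω) ≠ l}) := by
      intro ω hω
      have hωN : ∀ t, τk ω < t → ¬ PI.boundaryEvt (T t ω) := hω
      by_contra hc
      simp only [Set.mem_union, Set.mem_iUnion, Set.mem_preimage, Set.mem_setOf_eq, not_or,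
        not_exists, not_not] at hc
      obtain ⟨h1, h2⟩ := hc
      set m := τk ω with hm
      set l := (T (m+1) ω).2 with hl
      have hLI : ∀ t, m+1 ≤ t → (T t ω).2 = l := by
        intro t ht
        induction t with
        | zero => omega
        | succ t ih =>
          rcases Nat.eq_or_lt_of_le ht with heq | hlt
          · rw [← heq]
          · have ht' : m + 1 ≤ t := by omega
            have hLIt := ih ht'
            rw [hTsucc t ω, hstep2]
            by_cases hne : (PI.idleSet (T t ω).1).Nonempty
            · rw [if_pos hne]
              have hsub' : PI.idleSet (T t ω).1 ⊆ {(T t ω).2} := by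
                intro j hj
                rw [Finset.mem_singleton]
                by_contra hjne
                exact hωN t (by omega) ⟨j, hjne, (Finset.mem_filter.mp hj).2⟩
              have hsing : PI.idleSet (T t ω).1 = {(T t ω).2} := by
                rcases Finset.subset_singleton_iff.mp hsub' with h0 | h0
                · rw [h0] at hne; exact absurd hne (by simp)
                · exact h0
              rw [hsing, hLIt, h2]
            · rw [if_neg hne]; exact hLIt
      obtain ⟨j, hjl⟩ := Fintype.exists_ne_of_one_lt_card
        (by simp only [Fintype.card_fin]; omega) l
      have hdec : ∀ r : ℕ, (T (m+1+r) ω).1 j ≤ (T (m+1) ω).1 j - r := by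
        intro r
        induction r with
        | zero => simp
        | succ r ih =>
          have e1 : m + 1 + (r+1) = (m+1+r) + 1 := by omega
          rw [e1, hTsucc (m+1+r) ω, hstep1]
          have hLI2 : (PI.step choice (T (m+1+r) ω) (a (m+1+r) ω)
              (fun j' => s j' (m+1+r) ω) (U (m+1+r) ω)).2 = l := by
            rw [← hTsucc (m+1+r) ω]; exact hLI ((m+1+r)+1) (by omega)
          rw [hLI2, if_neg (fun h => hjl h.symm)]
          have hs1 : 1 ≤ s j (m+1+r) ω := h1 j (m+1+r)
          omega
      have hzero : (T (m+1+(T (m+1) ω).1 j) ω).1 j = 0 := by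
        have := hdec ((T (m+1) ω).1 j); omega
      exact hωN (m+1+(T (m+1) ω).1 j) (by omega)
        ⟨j, by rw [hLI _ (by omega)]; exact hjl, hzero⟩
    apply measure_mono_null hgood
    apply measure_union_null
    · refine measure_iUnion_null fun j => measure_iUnion_null fun t => ?_
      have hm : P α (s j t ⁻¹' {v : ℕ | ¬ 1 ≤ v}) = (νs j) {v : ℕ | ¬ 1 ≤ v} := by
        rw [← hs_law α j t, Measure.map_apply (hs_meas j t) MeasurableSet.of_discrete]
      rw [hm]
      refine measure_mono_null ?_ (hs_bdd j)
      intro v hv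
      simp only [Set.mem_setOf_eq] at *
      tauto
    · refine measure_iUnion_null fun l => measure_iUnion_null fun t => ?_
      have hC : MeasurableSet {u : ℝ | choice {l} u = l} :=
        hchoice_meas {l} (MeasurableSet.of_discrete (s := {l}))
      have he : {ω | choice {l} (U t ω) ≠ l} = U t ⁻¹' ({u : ℝ | choice {l} u = l}ᶜ) := rfl
      rw [he, ← Measure.map_apply (hU_meas t) hC.compl, hU_law α t]
      have h1' : (volume.restrict (Set.Icc (0:ℝ) 1)) {u | choice {l} u = l} = 1 := by
        rw [hchoice_unif {l} (Finset.singleton_nonempty l) l (Finset.mem_singleton_self l)]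
        simp
      have htot : (volume.restrict (Set.Icc (0:ℝ) 1)) Set.univ = 1 := by
        rw [Measure.restrict_apply MeasurableSet.univ, Set.univ_inter, Real.volume_Icc]
        norm_num
      rw [measure_compl hC (by rw [h1']; exact one_ne_top), htot, h1', tsub_self]
  -- Wald's identity for each fixed time index
  have hcast : Measurable (fun v : ℕ => (v : ℝ≥0∞)) := measurable_from_top
  have hsmeas' : ∀ u : ℕ, Measurable (fun ω => (s i u ω : ℝ≥0∞)) := fun u =>
    hcast.comp (hs_meas i u)
  have hsint : ∀ u : ℕ, ∫⁻ ω, (s i u ω : ℝ≥0∞) ∂(P α) = ENNReal.ofReal (μ i) := by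
    intro u
    rw [← hs_mean i, ← hs_law α i u, lintegral_map hcast (hs_meas i u)]
  have hWald : ∀ u, ∫⁻ ω in Aset u, (s i u ω : ℝ≥0∞) ∂(P α)
      = ENNReal.ofReal (μ i) * P α (Aset u) := by
    intro u
    have hMf : Measurable[MeasurableSpace.comap (s i u) inferInstance]
        (fun ω => (s i u ω : ℝ≥0∞)) :=
      hcast.comp (Measurable.of_comap_le le_rfl)
    have hind : IndepSets {S | MeasurableSet[MeasurableSpace.comap (s i u) inferInstance] S}
        {Aset u} (P α) := by
      rw [IndepSets_iff]
      rintro t1 t2 ht1 ht2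
      rw [Set.mem_singleton_iff] at ht2
      subst ht2
      exact ((Indep_iff _ _ _).1 (hindepG u)) t1 _ ht1 (hAG u)
    have h := lintegral_mul_indicator_eq_lintegral_mul_lintegral_indicator
      (Measurable.comap_le (hs_meas i u)) 1 (hAmeas u) hind hMf
    have e1 : ∫⁻ ω in Aset u, (s i u ω : ℝ≥0∞) ∂(P α)
        = ∫⁻ ω, (s i u ω : ℝ≥0∞) * (Aset u).indicator (fun _ => (1:ℝ≥0∞)) ω ∂(P α) := by
      rw [← lintegral_indicator (hAmeas u)]
      congr 1
      funext ω
      by_cases hω : ω ∈ Aset u <;> simp [Set.indicator, hω]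
    rw [e1, h, hsint u, lintegral_indicator (hAmeas u), setLIntegral_one]
  -- a.e. identification of A with E ∩ D
  have hBAae : ∀ u, (E ∩ Dset u : Set Ω) =ᵐ[P α] Aset u := by
    intro u
    rw [MeasureTheory.ae_eq_set]
    constructor
    · have hd : (E ∩ Dset u) \ Aset u = ∅ := Set.diff_eq_empty.mpr (hBsubA u)
      rw [hd]
      exact measure_empty
    · refine measure_mono_null ?_ hNnull
      rintro ω ⟨hA, hB⟩
      rcases hAsub u hA with h | h
      · exact absurd h hB
      · exact h
  have hABint : ∀ u, ∫⁻ ω in E ∩ Dset u, (s i u ω : ℝ≥0∞) ∂(P α)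
      = ∫⁻ ω in Aset u, (s i u ω : ℝ≥0∞) ∂(P α) := fun u => by
    rw [Measure.restrict_congr_set (hBAae u)]
  have hABmeas : ∀ u, P α (E ∩ Dset u) = P α (Aset u) := fun u => measure_congr (hBAae u)
  -- rewriting the interval sums as infinite sums of indicators
  have hsum : ∀ ω, (∑ t ∈ Finset.Ico (τk ω) (τk1 ω), (s i t ω : ℝ≥0∞))
      = ∑' u : ℕ, (Dset u).indicator (fun ω' => (s i u ω' : ℝ≥0∞)) ω := by
    intro ω
    have hval : ∀ u : ℕ, (Dset u).indicator (fun ω' => (s i u ω' : ℝ≥0∞)) ω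
        = if u ∈ Finset.Ico (τk ω) (τk1 ω) then (s i u ω : ℝ≥0∞) else 0 := by
      intro u
      simp only [Set.indicator_apply, hDset, Set.mem_setOf_eq, Finset.mem_Ico]
    calc (∑ t ∈ Finset.Ico (τk ω) (τk1 ω), (s i t ω : ℝ≥0∞))
        = ∑ t ∈ Finset.Ico (τk ω) (τk1 ω),
            (if t ∈ Finset.Ico (τk ω) (τk1 ω) then (s i t ω : ℝ≥0∞) else 0) :=
          Finset.sum_congr rfl (fun t ht => (if_pos ht).symm)
      _ = ∑' u : ℕ, (if u ∈ Finset.Ico (τk ω) (τk1 ω) then (s i u ω : ℝ≥0∞) else 0) :=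
          (tsum_eq_sum (fun b hb => if_neg hb)).symm
      _ = ∑' u : ℕ, (Dset u).indicator (fun ω' => (s i u ω' : ℝ≥0∞)) ω :=
          tsum_congr (fun u => (hval u).symm)
  have hcard : ∀ ω, ((τk1 ω - τk ω : ℕ) : ℝ≥0∞)
      = ∑' u : ℕ, (Dset u).indicator (fun _ => (1:ℝ≥0∞)) ω := by
    intro ω
    have h1 : ((τk1 ω - τk ω : ℕ) : ℝ≥0∞) = ∑ t ∈ Finset.Ico (τk ω) (τk1 ω), (1:ℝ≥0∞) := by
      rw [Finset.sum_const, Nat.card_Ico]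
      simp [nsmul_eq_mul]
    rw [h1]
    calc (∑ t ∈ Finset.Ico (τk ω) (τk1 ω), (1:ℝ≥0∞))
        = ∑ t ∈ Finset.Ico (τk ω) (τk1 ω),
            (if t ∈ Finset.Ico (τk ω) (τk1 ω) then (1:ℝ≥0∞) else 0) :=
          Finset.sum_congr rfl (fun t ht => (if_pos ht).symm)
      _ = ∑' u : ℕ, (if u ∈ Finset.Ico (τk ω) (τk1 ω) then (1:ℝ≥0∞) else 0) :=
          (tsum_eq_sum (fun b hb => if_neg hb)).symm
      _ = ∑' u : ℕ, (Dset u).indicator (fun _ => (1:ℝ≥0∞)) ω := by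
          refine tsum_congr (fun u => ?_)
          simp only [Set.indicator_apply, hDset, Set.mem_setOf_eq, Finset.mem_Ico]
  -- main computation
  have hLHS : ∫⁻ ω in E, (∑ t ∈ Finset.Ico (τk ω) (τk1 ω), (s i t ω : ℝ≥0∞)) ∂(P α)
      = ∑' u : ℕ, ∫⁻ ω in E ∩ Dset u, (s i u ω : ℝ≥0∞) ∂(P α) := by
    calc ∫⁻ ω in E, (∑ t ∈ Finset.Ico (τk ω) (τk1 ω), (s i t ω : ℝ≥0∞)) ∂(P α)
        = ∫⁻ ω in E, (∑' u : ℕ, (Dset u).indicator (fun ω' => (s i u ω' : ℝ≥0∞)) ω) ∂(P α) :=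
          lintegral_congr hsum
      _ = ∑' u : ℕ, ∫⁻ ω in E, (Dset u).indicator (fun ω' => (s i u ω' : ℝ≥0∞)) ω ∂(P α) :=
          lintegral_tsum (fun u => ((hsmeas' u).indicator (hDmeas u)).aemeasurable)
      _ = ∑' u : ℕ, ∫⁻ ω in E ∩ Dset u, (s i u ω : ℝ≥0∞) ∂(P α) := by
          refine tsum_congr (fun u => ?_)
          rw [lintegral_indicator (hDmeas u), Measure.restrict_restrict (hDmeas u),
            Set.inter_comm]
  have hRHS : ∫⁻ ω in E, ((τk1 ω - τk ω : ℕ) : ℝ≥0∞) ∂(P α)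
      = ∑' u : ℕ, P α (E ∩ Dset u) := by
    calc ∫⁻ ω in E, ((τk1 ω - τk ω : ℕ) : ℝ≥0∞) ∂(P α)
        = ∫⁻ ω in E, (∑' u : ℕ, (Dset u).indicator (fun _ => (1:ℝ≥0∞)) ω) ∂(P α) :=
          lintegral_congr hcard
      _ = ∑' u : ℕ, ∫⁻ ω in E, (Dset u).indicator (fun _ => (1:ℝ≥0∞)) ω ∂(P α) :=
          lintegral_tsum (fun u => ((measurable_const).indicator (hDmeas u)).aemeasurable)
      _ = ∑' u : ℕ, P α (E ∩ Dset u) := by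
          refine tsum_congr (fun u => ?_)
          rw [lintegral_indicator (hDmeas u), Measure.restrict_restrict (hDmeas u),
            Set.inter_comm, setLIntegral_one]
  rw [hLHS, hRHS]
  calc ∑' u : ℕ, ∫⁻ ω in E ∩ Dset u, (s i u ω : ℝ≥0∞) ∂(P α)
      = ∑' u : ℕ, ENNReal.ofReal (μ i) * P α (Aset u) := by
        refine tsum_congr (fun u => ?_)
        rw [hABint u, hWald u]
    _ = ENNReal.ofReal (μ i) * ∑' u : ℕ, P α (Aset u) := ENNReal.tsum_mul_left
    _ = ENNReal.ofReal (μ i) * ∑' u : ℕ, P α (E ∩ Dset u) := by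
        rw [tsum_congr (fun u => (hABmeas u).symm)]
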